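/- Every generalized Johnson graph J(n,k,i) is generously-transitive: for any two vertices A and B there exists a graph automorphism of J(n,k,i) that maps A to B and B to A. -/

import Mathlib

open SimpleGraph

/-- The cop's sequence of positions, given his initial vertex `c₀` and a
(history-dependent) strategy `F`, where `F n` determines the cop's `(n+1)`-st
position from the robber's positions `r 0, …, r n` seen so far. -/
def copSeq {V : Type*} (c₀ : V) (F : (n : ℕ) → (Fin (n + 1) → V) → V)
    (r : ℕ → V) : ℕ → V
  | 0 => c₀
  | n + 1 => F n (fun i : Fin (n + 1) => r i)

/-- The cop has a winning strategy in the cop and robber game with radius of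
capture `k` on the graph `G`: the cop chooses a starting vertex and a strategy
such that, against every legal play of the robber (at each step the robber
stays or moves to an adjacent vertex; his moves may depend on the whole
history), the cop's play is legal and at some point of the game the distance
between the two players is at most `k`. -/
def CopWinRC {V : Type*} (G : SimpleGraph V) (k : ℕ) : Prop :=
  ∃ (c₀ : V) (F : (n : ℕ) → (Fin (n + 1) → V) → V),
    ∀ r : ℕ → V,
      (∀ i, r (i + 1) = r i ∨ G.Adj (r i) (r (i + 1))) →
      ((∀ n, copSeq c₀ F r (n + 1) = copSeq c₀ F r n
            ∨ G.Adj (copSeq c₀ F r n) (copSeq c₀ F r (n + 1))) ∧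
        ∃ n, G.dist (copSeq c₀ F r n) (r n) ≤ k
           ∨ G.dist (copSeq c₀ F r (n + 1)) (r n) ≤ k)

/-- The radius capture number of `G`: the least `k` such that the cop wins
the cop and robber game with radius of capture `k`. -/
noncomputable def rcNum {V : Type*} (G : SimpleGraph V) : ℕ :=
  sInf {k | CopWinRC G k}

/-- Eccentricity of a vertex: the maximum distance to another vertex. -/
noncomputable def graphEcc {V : Type*} (G : SimpleGraph V) (v : V) : ℕ :=
  sSup (Set.range (G.dist v))

/-- Radius of a graph: the minimum eccentricity. -/
noncomputable def graphRad {V : Type*} (G : SimpleGraph V) : ℕ :=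
  sInf (Set.range (graphEcc G))

/-- The generalized Johnson graph `J(n,k,i)`: vertices are the `k`-element
subsets of an `n`-element set, with `A ~ B` iff `|A ∩ B| = i`. -/
def genJohnson (n k i : ℕ) : SimpleGraph {A : Finset (Fin n) // A.card = k} where
  Adj A B := A ≠ B ∧ ((A : Finset (Fin n)) ∩ (B : Finset (Fin n))).card = i
  symm := by
    constructor
    rintro A B ⟨hne, hcard⟩
    exact ⟨hne.symm, by rwa [Finset.inter_comm]⟩
  loopless := by
    constructor
    rintro A ⟨hne, -⟩
    exact hne rfl

/-- Every generalized Johnson graph `J(n,k,i)` (with `n > k > i`) is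
generously-transitive: any two vertices can be swapped by an automorphism. -/
theorem genJohnson_generouslyTransitive (n k i : ℕ) (hnk : k < n) (hki : i < k) :
    ∀ A B : {A : Finset (Fin n) // A.card = k},
      ∃ φ : genJohnson n k i ≃g genJohnson n k i, φ A = B ∧ φ B = A := by

  classical
  intro A B
  set s : Finset (Fin n) := (A : Finset (Fin n)) \ (B : Finset (Fin n)) with hs
  set t : Finset (Fin n) := (B : Finset (Fin n)) \ (A : Finset (Fin n)) with ht
  have hcard : s.card = t.card := by
    have h1 := Finset.card_sdiff_add_card_inter (A : Finset (Fin n)) (B : Finset (Fin n))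
    have h2 := Finset.card_sdiff_add_card_inter (B : Finset (Fin n)) (A : Finset (Fin n))
    rw [Finset.inter_comm] at h2
    have hA := A.2; have hB := B.2
    simp only [hs, ht]
    omega
  have hdisj : ∀ x : Fin n, x ∈ s → x ∉ t := by
    intro x hxs hxt
    simp only [hs, ht, Finset.mem_sdiff] at hxs hxt
    exact hxs.2 hxt.1
  let e : (s : Type) ≃ (t : Type) := s.equivOfCardEq hcard
  let g : Fin n → Fin n := fun x =>
    if h : x ∈ s then (e ⟨x, h⟩ : Fin n)
    else if h : x ∈ t then (e.symm ⟨x, h⟩ : Fin n) else x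
  have hginv : Function.Involutive g := by
    intro x
    by_cases hxs : x ∈ s
    · have hmem : (e ⟨x, hxs⟩ : Fin n) ∈ t := (e ⟨x, hxs⟩).2
      have hnot : (e ⟨x, hxs⟩ : Fin n) ∉ s := fun h => hdisj _ h hmem
      simp only [g, dif_pos hxs, dif_neg hnot, dif_pos hmem]
      have : (⟨(e ⟨x, hxs⟩ : Fin n), hmem⟩ : {y // y ∈ t}) = e ⟨x, hxs⟩ := rfl
      rw [this, Equiv.symm_apply_apply]
    · by_cases hxt : x ∈ t
      · have hmem : (e.symm ⟨x, hxt⟩ : Fin n) ∈ s := (e.symm ⟨x, hxt⟩).2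
        simp only [g, dif_neg hxs, dif_pos hxt, dif_pos hmem]
        have : (⟨(e.symm ⟨x, hxt⟩ : Fin n), hmem⟩ : {y // y ∈ s}) = e.symm ⟨x, hxt⟩ := rfl
        rw [this, Equiv.apply_symm_apply]
      · simp only [g, dif_neg hxs, dif_neg hxt]
  let σ : Equiv.Perm (Fin n) := hginv.toPerm
  have hσ : ∀ x, σ x = g x := fun x => rfl
  have hemb : σ.toEmbedding.trans σ.toEmbedding = Function.Embedding.refl (Fin n) := by
    ext x
    simp [hσ, hginv x]
  have hmapmap : ∀ C : Finset (Fin n), (C.map σ.toEmbedding).map σ.toEmbedding = C := by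
    intro C
    rw [Finset.map_map, hemb, Finset.map_refl]
  let F : {A : Finset (Fin n) // A.card = k} → {A : Finset (Fin n) // A.card = k} :=
    fun C => ⟨C.1.map σ.toEmbedding, by rw [Finset.card_map]; exact C.2⟩
  have hFF : ∀ C, F (F C) = C := by
    intro C
    apply Subtype.ext
    exact hmapmap C.1
  have hadj : ∀ C D, (genJohnson n k i).Adj C D → (genJohnson n k i).Adj (F C) (F D) := by
    rintro C D ⟨hne, hint⟩
    constructor
    · intro h
      apply hne
      rw [← hFF C, ← hFF D, h]
    · show ((F C).1 ∩ (F D).1).card = i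
      simp only [F]
      rw [← Finset.map_inter, Finset.card_map]
      exact hint
  let φ : genJohnson n k i ≃g genJohnson n k i :=
    { toFun := F
      invFun := F
      left_inv := hFF
      right_inv := hFF
      map_rel_iff' := by
        intro C D
        constructor
        · intro h
          have := hadj (F C) (F D) h
          rwa [hFF, hFF] at this
        · exact hadj C D }
  refine ⟨φ, ?_, ?_⟩
  · apply Subtype.ext
    show (A : Finset (Fin n)).map σ.toEmbedding = (B : Finset (Fin n))
    have hsub : (A : Finset (Fin n)).map σ.toEmbedding ⊆ (B : Finset (Fin n)) := by
      intro y hy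
      rw [Finset.mem_map] at hy
      obtain ⟨x, hx, rfl⟩ := hy
      show g x ∈ (B : Finset (Fin n))
      by_cases hxs : x ∈ s
      · simp only [g, dif_pos hxs]
        have : (e ⟨x, hxs⟩ : Fin n) ∈ t := (e ⟨x, hxs⟩).2
        exact (Finset.mem_sdiff.mp this).1
      · have hxt : x ∉ t := by
          rw [ht, Finset.mem_sdiff]
          rintro ⟨-, hxA⟩
          exact hxA hx
        simp only [g, dif_neg hxs, dif_neg hxt]
        rw [hs, Finset.mem_sdiff] at hxs
        by_contra hxB
        exact hxs ⟨hx, hxB⟩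
    apply Finset.eq_of_subset_of_card_le hsub
    rw [Finset.card_map, A.2, B.2]
  · apply Subtype.ext
    show (B : Finset (Fin n)).map σ.toEmbedding = (A : Finset (Fin n))
    have hAB : (A : Finset (Fin n)).map σ.toEmbedding = (B : Finset (Fin n)) := by
      have hsub : (A : Finset (Fin n)).map σ.toEmbedding ⊆ (B : Finset (Fin n)) := by
        intro y hy
        rw [Finset.mem_map] at hy
        obtain ⟨x, hx, rfl⟩ := hy
        show g x ∈ (B : Finset (Fin n))
        by_cases hxs : x ∈ s
        · simp only [g, dif_pos hxs]
          have : (e ⟨x, hxs⟩ : Fin n) ∈ t := (e ⟨x, hxs⟩).2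
          exact (Finset.mem_sdiff.mp this).1
        · have hxt : x ∉ t := by
            rw [ht, Finset.mem_sdiff]
            rintro ⟨-, hxA⟩
            exact hxA hx
          simp only [g, dif_neg hxs, dif_neg hxt]
          rw [hs, Finset.mem_sdiff] at hxs
          by_contra hxB
          exact hxs ⟨hx, hxB⟩
      apply Finset.eq_of_subset_of_card_le hsub
      rw [Finset.card_map, A.2, B.2]
    rw [← hAB, hmapmap]
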